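/- Let λ > 0 and let z_1, …, z_{t−1} ∈ ℝ^m be vectors with ‖z_s‖² ≤ λ for all s (Euclidean norm). Define V_t = λI + Σ_{s=1}^{t−1} z_s z_sᵀ and V_1 = λI. Then log(det(V_t)/det(V_1)) ≤ m log t for every integer t ≥ 1. -/

import Mathlib

open Matrix

private lemma sum_mulVec' {m : ℕ} {ι : Type*} (s : Finset ι)
    (M : ι → Matrix (Fin m) (Fin m) ℝ) (v : Fin m → ℝ) :
    (∑ i ∈ s, M i) *ᵥ v = ∑ i ∈ s, (M i *ᵥ v) := by
  ext j
  simp [Matrix.mulVec, dotProduct, Matrix.sum_apply, Finset.sum_mul]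
  rw [Finset.sum_comm]

private lemma vecMulVec_mulVec' {m : ℕ} (w v x : Fin m → ℝ) :
    vecMulVec w v *ᵥ x = (v ⬝ᵥ x) • w := by
  ext j
  simp [Matrix.mulVec, dotProduct, vecMulVec_apply, Finset.mul_sum, mul_comm,
    mul_left_comm]

private lemma dotProduct_sum' {m : ℕ} {ι : Type*} (s : Finset ι)
    (v : Fin m → ℝ) (f : ι → Fin m → ℝ) :
    v ⬝ᵥ (∑ i ∈ s, f i) = ∑ i ∈ s, v ⬝ᵥ f i := by
  simp [dotProduct, Finset.sum_apply, Finset.mul_sum]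
  rw [Finset.sum_comm]

/-- **Lemma (log-determinant bound for the regularized Gram matrix).**
Let `λ > 0` and let `z_1, …, z_{t−1} ∈ ℝ^m` with `‖z_s‖² ≤ λ` for all `s`
(Euclidean norm).  With `V_t = λI + Σ_{s=1}^{t−1} z_s z_sᵀ` and `V_1 = λI`,
we have `log(det V_t / det V_1) ≤ m·log t` for every integer `t ≥ 1`. -/
theorem log_det_gram_bound (m : ℕ) (lam : ℝ) (hlam : 0 < lam)
    (t : ℕ) (ht : 1 ≤ t) (z : ℕ → Fin m → ℝ)
    (hz : ∀ s ∈ Finset.Icc 1 (t - 1), ∑ i, z s i ^ 2 ≤ lam) :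
    Real.log
        ((lam • (1 : Matrix (Fin m) (Fin m) ℝ)
            + ∑ s ∈ Finset.Icc 1 (t - 1), vecMulVec (z s) (z s)).det
          / (lam • (1 : Matrix (Fin m) (Fin m) ℝ)).det)
      ≤ m * Real.log t := by
  classical
  set V : Matrix (Fin m) (Fin m) ℝ :=
    lam • (1 : Matrix (Fin m) (Fin m) ℝ)
      + ∑ s ∈ Finset.Icc 1 (t - 1), vecMulVec (z s) (z s) with hVdef
  -- V is symmetric
  have hherm : V.IsHermitian := by
    refine Matrix.IsHermitian.ext fun i j => ?_
    simp only [hVdef, Matrix.add_apply, Matrix.smul_apply, Matrix.one_apply,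
      Matrix.sum_apply, vecMulVec_apply, RCLike.star_def, starRingEnd_apply, star_trivial]
    by_cases h : i = j <;> simp [h, eq_comm, mul_comm]
  -- quadratic form bound on eigenvectors
  have key : ∀ k : Fin m, lam ≤ hherm.eigenvalues k ∧ hherm.eigenvalues k ≤ t * lam := by
    intro k
    set v : Fin m → ℝ := ⇑(hherm.eigenvectorBasis k) with hv
    have hnorm : v ⬝ᵥ v = 1 := by
      have h1 : ‖hherm.eigenvectorBasis k‖ = 1 := hherm.eigenvectorBasis.orthonormal.1 k
      have h2 : (inner ℝ (hherm.eigenvectorBasis k) (hherm.eigenvectorBasis k) : ℝ)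
          = ‖hherm.eigenvectorBasis k‖ ^ 2 := real_inner_self_eq_norm_sq _
      rw [h1] at h2
      rw [PiLp.inner_apply] at h2
      simpa [dotProduct, PiLp.inner_apply, v, sq] using h2
    have heig : hherm.eigenvalues k = v ⬝ᵥ (V *ᵥ v) := by
      have := hherm.eigenvalues_eq k
      simpa [v] using this
    have hVv : V *ᵥ v = lam • v + ∑ s ∈ Finset.Icc 1 (t - 1), (z s ⬝ᵥ v) • z s := by
      rw [hVdef, Matrix.add_mulVec, Matrix.smul_mulVec, Matrix.one_mulVec,
        sum_mulVec']
      congr 1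
      exact Finset.sum_congr rfl fun s _ => vecMulVec_mulVec' _ _ _
    have hform : hherm.eigenvalues k
        = lam + ∑ s ∈ Finset.Icc 1 (t - 1), (z s ⬝ᵥ v) ^ 2 := by
      rw [heig, hVv, dotProduct_add, dotProduct_smul, dotProduct_sum']
      rw [hnorm]
      simp only [smul_eq_mul, mul_one]
      congr 1
      refine Finset.sum_congr rfl fun s _ => ?_
      rw [dotProduct_smul, smul_eq_mul, dotProduct_comm, sq]
    constructor
    · rw [hform]
      have : (0:ℝ) ≤ ∑ s ∈ Finset.Icc 1 (t - 1), (z s ⬝ᵥ v) ^ 2 :=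
        Finset.sum_nonneg fun s _ => sq_nonneg _
      linarith
    · rw [hform]
      have hbound : ∑ s ∈ Finset.Icc 1 (t - 1), (z s ⬝ᵥ v) ^ 2
          ≤ ∑ s ∈ Finset.Icc 1 (t - 1), lam := by
        refine Finset.sum_le_sum fun s hs => ?_
        have hcs := Finset.sum_mul_sq_le_sq_mul_sq Finset.univ (z s) v
        have hv1 : ∑ i, v i ^ 2 = 1 := by
          simpa [dotProduct, sq] using hnorm
        calc (z s ⬝ᵥ v) ^ 2 = (∑ i, z s i * v i) ^ 2 := rfl
          _ ≤ (∑ i, z s i ^ 2) * ∑ i, v i ^ 2 := hcs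
          _ = ∑ i, z s i ^ 2 := by rw [hv1, mul_one]
          _ ≤ lam := hz s hs
      have hcard : ((Finset.Icc 1 (t - 1)).card : ℝ) = (t : ℝ) - 1 := by
        rw [Nat.card_Icc]
        have : t - 1 + 1 - 1 = t - 1 := by omega
        rw [this, Nat.cast_sub ht]
        norm_num
      have : ∑ s ∈ Finset.Icc 1 (t - 1), (z s ⬝ᵥ v) ^ 2 ≤ ((t : ℝ) - 1) * lam := by
        calc _ ≤ ∑ s ∈ Finset.Icc 1 (t - 1), lam := hbound
          _ = ((Finset.Icc 1 (t - 1)).card : ℝ) * lam := by rw [Finset.sum_const, nsmul_eq_mul]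
          _ = ((t : ℝ) - 1) * lam := by rw [hcard]
      nlinarith
  -- put the pieces together
  have hdet1 : (lam • (1 : Matrix (Fin m) (Fin m) ℝ)).det = lam ^ m := by
    simp [Matrix.det_smul]
  have hdetV : V.det = ∏ k, hherm.eigenvalues k := by
    have := hherm.det_eq_prod_eigenvalues
    simpa using this
  have htpos : (0:ℝ) < (t : ℝ) := by exact_mod_cast Nat.lt_of_lt_of_le Nat.zero_lt_one ht
  have hdetV_le : V.det ≤ ((t : ℝ) * lam) ^ m := by
    rw [hdetV]
    calc ∏ k, hherm.eigenvalues k ≤ ∏ _k : Fin m, (t : ℝ) * lam :=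
          Finset.prod_le_prod (fun k _ => le_trans hlam.le (key k).1) (fun k _ => (key k).2)
      _ = ((t : ℝ) * lam) ^ m := by simp
  have hdetV_pos : (0:ℝ) < V.det := by
    rw [hdetV]
    exact Finset.prod_pos fun k _ => lt_of_lt_of_le hlam (key k).1
  have hratio : V.det / (lam • (1 : Matrix (Fin m) (Fin m) ℝ)).det ≤ (t : ℝ) ^ m := by
    rw [hdet1, div_le_iff₀ (pow_pos hlam m)]
    calc V.det ≤ ((t : ℝ) * lam) ^ m := hdetV_le
      _ = (t : ℝ) ^ m * lam ^ m := mul_pow _ _ _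
  have hratio_pos : 0 < V.det / (lam • (1 : Matrix (Fin m) (Fin m) ℝ)).det := by
    rw [hdet1]
    exact div_pos hdetV_pos (pow_pos hlam m)
  calc Real.log (V.det / (lam • (1 : Matrix (Fin m) (Fin m) ℝ)).det)
      ≤ Real.log ((t : ℝ) ^ m) := Real.log_le_log hratio_pos hratio
    _ = m * Real.log t := by rw [Real.log_pow]
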